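/- Let G₁ be a k × m random matrix and G₂ a k × n random matrix such that G₁ and G₂ are independent, E[G₁ᵀ G₁] = I_m, and E[G₂ᵀ G₂] = I_n. Then for all fixed vectors a, a' ∈ ℝ^m and b, b' ∈ ℝ^n, E[⟨G₁ a bᵀ G₂ᵀ, G₁ a' b'ᵀ G₂ᵀ⟩_F] = ⟨a bᵀ, a' b'ᵀ⟩_F = (a · a')(b · b'); that is, the Frobenius inner product of the doubly projected rank-one matrices is an unbiased estimator of the Frobenius inner product of the original rank-one matrices. -/

import Mathlib

open MeasureTheory ProbabilityTheory Matrix Finset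

local instance matrixMeasurableSpace {ι κ α : Type*} [MeasurableSpace α] :
    MeasurableSpace (Matrix ι κ α) :=
  inferInstanceAs (MeasurableSpace (ι → κ → α))

private lemma aux_entry {k m n : ℕ} (A : Matrix (Fin k) (Fin m) ℝ)
    (B : Matrix (Fin k) (Fin n) ℝ) (a : Fin m → ℝ) (b : Fin n → ℝ) (i j : Fin k) :
    (A * vecMulVec a b * Bᵀ) i j = A.mulVec a i * B.mulVec b j := by
  simp only [Matrix.mul_apply, vecMulVec_apply, Matrix.transpose_apply, Matrix.mulVec,
    dotProduct]
  calc ∑ q, (∑ p, A i p * (a p * b q)) * B j q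
      = ∑ q, ∑ p, A i p * (a p * b q) * B j q := by simp only [Finset.sum_mul]
    _ = ∑ p, ∑ q, A i p * a p * (B j q * b q) := by
        rw [Finset.sum_comm]
        exact Finset.sum_congr rfl fun p _ => Finset.sum_congr rfl fun q _ => by ring
    _ = (∑ p, A i p * a p) * ∑ q, B j q * b q := (Finset.sum_mul_sum _ _ _ _).symm

private lemma aux_meas {k m : ℕ} (a a' : Fin m → ℝ) :
    Measurable (fun M : Matrix (Fin k) (Fin m) ℝ => M.mulVec a ⬝ᵥ M.mulVec a') := by
  simp only [Matrix.mulVec, dotProduct]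
  apply Finset.measurable_sum
  intro i _
  apply Measurable.mul <;>
  · apply Finset.measurable_sum
    intro p _
    exact ((measurable_pi_apply p).comp (measurable_pi_apply i)).mul_const _

private lemma aux_rewrite {k m : ℕ} (M : Matrix (Fin k) (Fin m) ℝ) (a a' : Fin m → ℝ) :
    M.mulVec a ⬝ᵥ M.mulVec a'
      = ∑ i : Fin k, ∑ p : Fin m, ∑ q : Fin m, a p * a' q * (M i p * M i q) := by
  simp only [dotProduct, Matrix.mulVec]
  refine Finset.sum_congr rfl fun i _ => ?_
  rw [Finset.sum_mul_sum]
  exact Finset.sum_congr rfl fun p _ => Finset.sum_congr rfl fun q _ => by ring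

private lemma aux_int {k m : ℕ} {Ω : Type*} [MeasurableSpace Ω] (μ : Measure Ω)
    (G : Ω → Matrix (Fin k) (Fin m) ℝ)
    (hint : ∀ (i : Fin k) (j j' : Fin m), Integrable (fun ω => G ω i j * G ω i j') μ)
    (a a' : Fin m → ℝ) :
    Integrable (fun ω => (G ω).mulVec a ⬝ᵥ (G ω).mulVec a') μ := by
  simp only [aux_rewrite]
  apply integrable_finset_sum; intro i _
  apply integrable_finset_sum; intro p _
  apply integrable_finset_sum; intro q _
  exact (hint i p q).const_mul _

private lemma aux_integral {k m : ℕ} {Ω : Type*} [MeasurableSpace Ω] (μ : Measure Ω)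
    [IsProbabilityMeasure μ] (G : Ω → Matrix (Fin k) (Fin m) ℝ)
    (hint : ∀ (i : Fin k) (j j' : Fin m), Integrable (fun ω => G ω i j * G ω i j') μ)
    (hE : ∀ i j : Fin m, ∫ ω, ((G ω)ᵀ * G ω) i j ∂μ = (1 : Matrix (Fin m) (Fin m) ℝ) i j)
    (a a' : Fin m → ℝ) :
    ∫ ω, (G ω).mulVec a ⬝ᵥ (G ω).mulVec a' ∂μ = a ⬝ᵥ a' := by
  have hE' : ∀ p q : Fin m,
      ∑ i : Fin k, ∫ ω, G ω i p * G ω i q ∂μ = (1 : Matrix (Fin m) (Fin m) ℝ) p q := by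
    intro p q
    rw [← integral_finset_sum _ (fun i _ => hint i p q)]
    have := hE p q
    simpa only [Matrix.mul_apply, Matrix.transpose_apply] using this
  simp only [aux_rewrite]
  rw [integral_finset_sum _ (fun i _ => by
    exact integrable_finset_sum _ (fun p _ =>
      integrable_finset_sum _ (fun q _ => (hint i p q).const_mul _)))]
  have h1 : ∀ i : Fin k,
      ∫ ω, ∑ p : Fin m, ∑ q : Fin m, a p * a' q * (G ω i p * G ω i q) ∂μ
        = ∑ p : Fin m, ∑ q : Fin m, a p * a' q * ∫ ω, G ω i p * G ω i q ∂μ := by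
    intro i
    rw [integral_finset_sum _ (fun p _ =>
      integrable_finset_sum _ (fun q _ => (hint i p q).const_mul _))]
    refine Finset.sum_congr rfl fun p _ => ?_
    rw [integral_finset_sum _ (fun q _ => (hint i p q).const_mul _)]
    exact Finset.sum_congr rfl fun q _ => integral_const_mul _ _
  simp only [h1]
  rw [Finset.sum_comm]
  have h2 : ∀ p : Fin m,
      ∑ i : Fin k, ∑ q : Fin m, a p * a' q * ∫ ω, G ω i p * G ω i q ∂μ
        = ∑ q : Fin m, a p * a' q * (1 : Matrix (Fin m) (Fin m) ℝ) p q := by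
    intro p
    rw [Finset.sum_comm]
    refine Finset.sum_congr rfl fun q _ => ?_
    rw [← Finset.mul_sum, hE' p q]
  simp only [h2, Matrix.one_apply, mul_ite, mul_one, mul_zero, Finset.sum_ite_eq,
    Finset.mem_univ, if_true, dotProduct]

/-- **Unbiasedness of double random projections of rank-one matrices.**
Let `G₁` (`k × m`) and `G₂` (`k × n`) be independent random matrices with
integrable entrywise second moments, `E[G₁ᵀ G₁] = Iₘ` and `E[G₂ᵀ G₂] = Iₙ`.
Then for all fixed `a, a' ∈ ℝ^m`, `b, b' ∈ ℝ^n`,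
`E[⟨G₁ a bᵀ G₂ᵀ, G₁ a' b'ᵀ G₂ᵀ⟩_F] = ⟨a bᵀ, a' b'ᵀ⟩_F = (a ⬝ᵥ a') (b ⬝ᵥ b')`. -/
theorem double_random_projection_rank_one_unbiased
    {k m n : ℕ} {Ω : Type*} [MeasurableSpace Ω] (μ : Measure Ω) [IsProbabilityMeasure μ]
    (G₁ : Ω → Matrix (Fin k) (Fin m) ℝ) (G₂ : Ω → Matrix (Fin k) (Fin n) ℝ)
    (hindep : IndepFun G₁ G₂ μ)
    (hmeas₁ : Measurable G₁) (hmeas₂ : Measurable G₂)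
    (hint₁ : ∀ (i : Fin k) (j j' : Fin m), Integrable (fun ω => G₁ ω i j * G₁ ω i j') μ)
    (hint₂ : ∀ (i : Fin k) (j j' : Fin n), Integrable (fun ω => G₂ ω i j * G₂ ω i j') μ)
    (hE₁ : ∀ i j : Fin m, ∫ ω, ((G₁ ω)ᵀ * G₁ ω) i j ∂μ = (1 : Matrix (Fin m) (Fin m) ℝ) i j)
    (hE₂ : ∀ i j : Fin n, ∫ ω, ((G₂ ω)ᵀ * G₂ ω) i j ∂μ = (1 : Matrix (Fin n) (Fin n) ℝ) i j)
    (a a' : Fin m → ℝ) (b b' : Fin n → ℝ) :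
    ∫ ω, ∑ i : Fin k, ∑ j : Fin k,
        (G₁ ω * vecMulVec a b * (G₂ ω)ᵀ) i j * (G₁ ω * vecMulVec a' b' * (G₂ ω)ᵀ) i j ∂μ
      = ∑ i : Fin m, ∑ j : Fin n, vecMulVec a b i j * vecMulVec a' b' i j ∧
    ∑ i : Fin m, ∑ j : Fin n, vecMulVec a b i j * vecMulVec a' b' i j
      = (a ⬝ᵥ a') * (b ⬝ᵥ b') := by
  have hrhs : ∑ i : Fin m, ∑ j : Fin n, vecMulVec a b i j * vecMulVec a' b' i j
      = (a ⬝ᵥ a') * (b ⬝ᵥ b') := by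
    simp only [vecMulVec_apply, dotProduct]
    rw [Finset.sum_mul_sum]
    exact Finset.sum_congr rfl fun i _ => Finset.sum_congr rfl fun j _ => by ring
  refine ⟨?_, hrhs⟩
  have hpt : ∀ ω, ∑ i : Fin k, ∑ j : Fin k,
      (G₁ ω * vecMulVec a b * (G₂ ω)ᵀ) i j * (G₁ ω * vecMulVec a' b' * (G₂ ω)ᵀ) i j
      = ((G₁ ω).mulVec a ⬝ᵥ (G₁ ω).mulVec a') * ((G₂ ω).mulVec b ⬝ᵥ (G₂ ω).mulVec b') := by
    intro ω
    simp only [aux_entry, dotProduct]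
    rw [Finset.sum_mul_sum]
    exact Finset.sum_congr rfl fun i _ => Finset.sum_congr rfl fun j _ => by ring
  simp only [hpt]
  have hindep' : IndepFun (fun ω => (G₁ ω).mulVec a ⬝ᵥ (G₁ ω).mulVec a')
      (fun ω => (G₂ ω).mulVec b ⬝ᵥ (G₂ ω).mulVec b') μ :=
    hindep.comp (aux_meas a a') (aux_meas b b')
  have key : ∫ ω, ((G₁ ω).mulVec a ⬝ᵥ (G₁ ω).mulVec a')
        * ((G₂ ω).mulVec b ⬝ᵥ (G₂ ω).mulVec b') ∂μ
      = (∫ ω, (G₁ ω).mulVec a ⬝ᵥ (G₁ ω).mulVec a' ∂μ)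
        * ∫ ω, (G₂ ω).mulVec b ⬝ᵥ (G₂ ω).mulVec b' ∂μ :=
    hindep'.integral_fun_mul_eq_mul_integral (aux_int μ G₁ hint₁ a a').aestronglyMeasurable
      (aux_int μ G₂ hint₂ b b').aestronglyMeasurable
  rw [key, aux_integral μ G₁ hint₁ hE₁ a a', aux_integral μ G₂ hint₂ hE₂ b b', hrhs]
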